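/- Let B ⊆ Z_{≥0}^{m_1+...+m_n} be a set of vectors of equal modulus satisfying the generalized bi-exchange property, and fix a coordinate (i0,j0). Let r = max{a_{i0 j0} : a ∈ B} and let B' = {a − r·e_{i0 j0} : a ∈ B, a_{i0 j0} = r}. Then B' satisfies the generalized bi-exchange property, and every element b ∈ B with b written with coordinate (i0,j0) deleted is componentwise ≥ some element of B' with coordinate (i0,j0) deleted; i.e., for each b ∈ B there exists u ∈ B with u_{i0 j0} = r such that u_{ij} ≤ b_{ij} for all (i,j) ≠ (i0,j0). -/
import Mathlib


open Finset

/-- Index set: pairs (i,j) with 1 ≤ i ≤ n, 1 ≤ j ≤ m i. -/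
abbrev Idx (n : ℕ) (m : Fin n → ℕ) := (i : Fin n) × Fin (m i)

/-- The vector a − e_{ij} + e_{il}. -/
def exchStep {n : ℕ} {m : Fin n → ℕ} (a : Idx n m → ℕ) (i : Fin n) (j l : Fin (m i)) :
    Idx n m → ℕ :=
  fun p => if p = ⟨i, j⟩ then a p - 1 else if p = ⟨i, l⟩ then a p + 1 else a p

/-- The generalized bi-exchange property. -/
def BiExchange {n : ℕ} {m : Fin n → ℕ} (B : Set (Idx n m → ℕ)) : Prop :=
  ∀ a ∈ B, ∀ b ∈ B, ∀ (i : Fin n) (j : Fin (m i)),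
    b ⟨i, j⟩ < a ⟨i, j⟩ →
      ∃ l : Fin (m i), a ⟨i, l⟩ < b ⟨i, l⟩ ∧ exchStep a i j l ∈ B

private lemma stmt5_aux {n : ℕ} {m : Fin n → ℕ} {B : Set (Idx n m → ℕ)}
    (hex : BiExchange B) {i0 : Fin n} {j0 : Fin (m i0)} {r : ℕ}
    {b : Idx n m → ℕ} (hb : b ∈ B) (hbr : b ⟨i0, j0⟩ ≤ r) :
    ∀ N (a : Idx n m → ℕ), a ∈ B → a ⟨i0, j0⟩ = r →
      (∑ p ∈ univ.erase (⟨i0, j0⟩ : Idx n m), (a p - b p)) ≤ N →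
      ∃ u ∈ B, u ⟨i0, j0⟩ = r ∧ ∀ p : Idx n m, p ≠ ⟨i0, j0⟩ → u p ≤ b p := by
  intro N
  induction N with
  | zero =>
    intro a ha har hsum
    refine ⟨a, ha, har, fun p hp => ?_⟩
    have hm : p ∈ univ.erase (⟨i0, j0⟩ : Idx n m) := mem_erase.mpr ⟨hp, mem_univ p⟩
    have h0 : ∑ p ∈ univ.erase (⟨i0, j0⟩ : Idx n m), (a p - b p) = 0 := Nat.le_zero.mp hsum
    have := (Finset.sum_eq_zero_iff.mp h0) p hm
    omega
  | succ N ih =>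
    intro a ha har hsum
    by_cases h0 : ∀ p : Idx n m, p ≠ ⟨i0, j0⟩ → a p ≤ b p
    · exact ⟨a, ha, har, h0⟩
    push_neg at h0
    obtain ⟨⟨i, j⟩, hpne, hpb⟩ := h0
    obtain ⟨l, hl, hstep⟩ := hex a ha b hb i j hpb
    have hlne : (⟨i, l⟩ : Idx n m) ≠ ⟨i0, j0⟩ := by
      intro h
      rw [h] at hl
      omega
    have hstep0 : exchStep a i j l ⟨i0, j0⟩ = r := by
      simp only [exchStep]
      rw [if_neg (by exact fun h => hpne h.symm), if_neg (by exact fun h => hlne h.symm)]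
      exact har
    have hle : ∀ p ∈ univ.erase (⟨i0, j0⟩ : Idx n m),
        exchStep a i j l p - b p ≤ a p - b p := by
      intro p _
      simp only [exchStep]
      by_cases h1 : p = ⟨i, j⟩
      · rw [if_pos h1]; omega
      · rw [if_neg h1]
        by_cases h2 : p = ⟨i, l⟩
        · rw [if_pos h2, h2]; omega
        · rw [if_neg h2]
    have hv : exchStep a i j l ⟨i, j⟩ = a ⟨i, j⟩ - 1 := by simp [exchStep]
    have hstrict : exchStep a i j l ⟨i, j⟩ - b ⟨i, j⟩ < a ⟨i, j⟩ - b ⟨i, j⟩ := by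
      rw [hv]; omega
    have hlt : ∑ p ∈ univ.erase (⟨i0, j0⟩ : Idx n m), (exchStep a i j l p - b p) <
        ∑ p ∈ univ.erase (⟨i0, j0⟩ : Idx n m), (a p - b p) :=
      Finset.sum_lt_sum hle ⟨⟨i, j⟩, mem_erase.mpr ⟨hpne, mem_univ _⟩, hstrict⟩
    exact ih (exchStep a i j l) hstep hstep0 (by omega)

/-- localizing at a variable: the set B' of vectors a − r·e_{i0 j0} with
a ∈ B and a_{i0 j0} = r maximal satisfies the generalized bi-exchange property, and every
b ∈ B dominates, away from (i0,j0), some element of B with maximal (i0,j0)-coordinate. -/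
theorem stmt5 {n : ℕ} {m : Fin n → ℕ} (B : Set (Idx n m → ℕ)) (t : ℕ)
    (hmod : ∀ a ∈ B, (∑ p, a p) = t) (hex : BiExchange B)
    (i0 : Fin n) (j0 : Fin (m i0)) (r : ℕ)
    (hub : ∀ a ∈ B, a ⟨i0, j0⟩ ≤ r) (hmax : ∃ a ∈ B, a ⟨i0, j0⟩ = r) :
    BiExchange {c : Idx n m → ℕ | ∃ a ∈ B, a ⟨i0, j0⟩ = r ∧
        c = fun p => if p = ⟨i0, j0⟩ then 0 else a p} ∧
      ∀ b ∈ B, ∃ u ∈ B, u ⟨i0, j0⟩ = r ∧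
        ∀ p : Idx n m, p ≠ ⟨i0, j0⟩ → u p ≤ b p := by
  constructor
  · rintro c ⟨a, ha, har, rfl⟩ c' ⟨b, hb, hbr, rfl⟩ i j hlt
    simp only at hlt
    have hne : (⟨i, j⟩ : Idx n m) ≠ ⟨i0, j0⟩ := by
      intro h
      rw [if_pos h, if_pos h] at hlt
      omega
    rw [if_neg hne, if_neg hne] at hlt
    obtain ⟨l, hl, hstep⟩ := hex a ha b hb i j hlt
    have hlne : (⟨i, l⟩ : Idx n m) ≠ ⟨i0, j0⟩ := by
      intro h
      rw [h, har, hbr] at hl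
      omega
    refine ⟨l, by simp only; rw [if_neg hlne, if_neg hlne]; exact hl, ?_⟩
    refine ⟨exchStep a i j l, hstep, ?_, ?_⟩
    · simp only [exchStep]
      rw [if_neg (by exact fun h => hne h.symm), if_neg (by exact fun h => hlne h.symm)]
      exact har
    · funext p
      simp only [exchStep]
      by_cases h1 : p = ⟨i, j⟩
      · subst h1; simp [hne]
      · by_cases h2 : p = ⟨i, l⟩
        · subst h2; simp [hlne, h1]
        · by_cases h3 : p = ⟨i0, j0⟩
          · subst h3; simp [Ne.symm hne, Ne.symm hlne]
          · simp [h1, h2, h3]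
  · intro b hb
    obtain ⟨a, ha, har⟩ := hmax
    exact stmt5_aux hex hb (hub b hb) _ a ha har le_rfl
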